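/- With the above notation, r_A·(√(l²+1) + √(m̄²+1) + √(n̄²+1) + l − m̄ − n̄ + 1)/(2l) = r·cosh²σ_A. -/

import Mathlib

open Real

lemma my_sq_eq {x y : ℝ} (hx : 0 ≤ x) (hy : 0 ≤ y) (h : x ^ 2 = y ^ 2) : x = y := by
  calc x = Real.sqrt (x ^ 2) := (Real.sqrt_sq hx).symm
    _ = Real.sqrt (y ^ 2) := by rw [h]
    _ = y := Real.sqrt_sq hy

set_option maxHeartbeats 1600000 in
theorem malfatti_radius_a2
    (a b c : ℝ) (ha : 0 < a) (hb : 0 < b) (hc : 0 < c)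
    (habc : a < b + c) (hbca : b < c + a) (hcab : c < a + b)
    (s r rA rC αA βA γA σA l mb nb : ℝ)
    (hs : s = (a + b + c) / 2)
    (hr : r = Real.sqrt ((s - a) * (s - b) * (s - c) / s))
    (hrA : rA = Real.sqrt (s * (s - b) * (s - c) / (s - a)))
    (hrC : rC = Real.sqrt (s * (s - a) * (s - b) / (s - c)))
    (hαA : 0 < αA) (hβA : 0 < βA) (hγA : 0 < γA)
    (hsinhα : Real.sinh αA ^ 2 = a / (s - a))
    (hsinhβ : Real.sinh βA ^ 2 = (s - c) / (s - a))
    (hsinhγ : Real.sinh γA ^ 2 = (s - b) / (s - a))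
    (hσA : σA = (αA + βA + γA) / 2)
    (hl : l = s / rA) (hm : mb = (s - c) / rA) (hn : nb = (s - b) / rA) :
    rA * (Real.sqrt (l ^ 2 + 1) + Real.sqrt (mb ^ 2 + 1) + Real.sqrt (nb ^ 2 + 1) + l - mb - nb + 1) / (2 * l) = r * Real.cosh σA ^ 2 := by
  have hxp : 0 < s - a := by rw [hs]; linarith
  have hyp : 0 < s - b := by rw [hs]; linarith
  have hzp : 0 < s - c := by rw [hs]; linarith
  have hsp : 0 < s := by rw [hs]; linarith
  have hp : 0 < Real.sqrt s := Real.sqrt_pos.mpr hsp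
  have hq : 0 < Real.sqrt (s - a) := Real.sqrt_pos.mpr hxp
  have ht : 0 < Real.sqrt (s - b) := Real.sqrt_pos.mpr hyp
  have hw : 0 < Real.sqrt (s - c) := Real.sqrt_pos.mpr hzp
  have hA : 0 < Real.sqrt a := Real.sqrt_pos.mpr ha
  have hB : 0 < Real.sqrt b := Real.sqrt_pos.mpr hb
  have hC : 0 < Real.sqrt c := Real.sqrt_pos.mpr hc
  have hp2 : (Real.sqrt s) ^ 2 = s := Real.sq_sqrt hsp.le
  have hq2 : (Real.sqrt (s - a)) ^ 2 = s - a := Real.sq_sqrt hxp.le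
  have ht2 : (Real.sqrt (s - b)) ^ 2 = s - b := Real.sq_sqrt hyp.le
  have hw2 : (Real.sqrt (s - c)) ^ 2 = s - c := Real.sq_sqrt hzp.le
  have hA2 : (Real.sqrt a) ^ 2 = a := Real.sq_sqrt ha.le
  have hB2 : (Real.sqrt b) ^ 2 = b := Real.sq_sqrt hb.le
  have hC2 : (Real.sqrt c) ^ 2 = c := Real.sq_sqrt hc.le
  set p := Real.sqrt s
  set q := Real.sqrt (s - a)
  set t := Real.sqrt (s - b)
  set w := Real.sqrt (s - c)
  set A := Real.sqrt a
  set B := Real.sqrt b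
  set C := Real.sqrt c
  have hp0 : p ≠ 0 := hp.ne'
  have hq0 : q ≠ 0 := hq.ne'
  have ht0 : t ≠ 0 := ht.ne'
  have hw0 : w ≠ 0 := hw.ne'
  have hx0 : s - a ≠ 0 := hxp.ne'
  have hy0 : s - b ≠ 0 := hyp.ne'
  have hz0 : s - c ≠ 0 := hzp.ne'
  have hs0 : s ≠ 0 := hsp.ne'
  -- rA and r in terms of the sqrt-variables
  have hrAv : rA = p * t * w / q := by
    rw [hrA, show s * (s - b) * (s - c) / (s - a) = (p * t * w / q) ^ 2 by
      rw [div_pow, mul_pow, mul_pow, hp2, ht2, hw2, hq2]]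
    exact Real.sqrt_sq (by positivity)
  have hrv : r = q * t * w / p := by
    rw [hr, show (s - a) * (s - b) * (s - c) / s = (q * t * w / p) ^ 2 by
      rw [div_pow, mul_pow, mul_pow, hq2, ht2, hw2, hp2]]
    exact Real.sqrt_sq (by positivity)
  -- hyperbolic values
  have hca : Real.cosh αA = p / q := by
    apply my_sq_eq (Real.cosh_pos αA).le (by positivity)
    rw [Real.cosh_sq, hsinhα, div_pow, hp2, hq2]
    field_simp
    ring
  have hcb : Real.cosh βA = B / q := by
    apply my_sq_eq (Real.cosh_pos βA).le (by positivity)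
    rw [Real.cosh_sq, hsinhβ, div_pow, hB2, hq2]
    field_simp
    rw [hs]; ring
  have hcc : Real.cosh γA = C / q := by
    apply my_sq_eq (Real.cosh_pos γA).le (by positivity)
    rw [Real.cosh_sq, hsinhγ, div_pow, hC2, hq2]
    field_simp
    rw [hs]; ring
  have hsa : Real.sinh αA = A / q := by
    apply my_sq_eq (Real.sinh_pos_iff.mpr hαA).le (by positivity)
    rw [hsinhα, div_pow, hA2, hq2]
  have hsb : Real.sinh βA = w / q := by
    apply my_sq_eq (Real.sinh_pos_iff.mpr hβA).le (by positivity)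
    rw [hsinhβ, div_pow, hw2, hq2]
  have hsc : Real.sinh γA = t / q := by
    apply my_sq_eq (Real.sinh_pos_iff.mpr hγA).le (by positivity)
    rw [hsinhγ, div_pow, ht2, hq2]
  -- l, mb, nb in the sqrt variables
  have hl' : l = p * q / (t * w) := by
    rw [hl, hrAv, ← hp2]; field_simp
  have hm' : mb = w * q / (p * t) := by
    rw [hm, hrAv, ← hw2]; field_simp
  have hn' : nb = t * q / (p * w) := by
    rw [hn, hrAv, ← ht2]; field_simp
  -- the three square roots
  have hsq1 : Real.sqrt (l ^ 2 + 1) = B * C / (t * w) := by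
    rw [show l ^ 2 + 1 = (B * C / (t * w)) ^ 2 by
      rw [hl', div_pow, div_pow, mul_pow, mul_pow, mul_pow, hp2, hq2, ht2, hw2, hB2, hC2]
      field_simp
      rw [hs]; ring]
    exact Real.sqrt_sq (by positivity)
  have hsq2 : Real.sqrt (mb ^ 2 + 1) = C * A / (p * t) := by
    rw [show mb ^ 2 + 1 = (C * A / (p * t)) ^ 2 by
      rw [hm', div_pow, div_pow, mul_pow, mul_pow, mul_pow, hp2, hq2, ht2, hw2, hC2, hA2]
      field_simp
      rw [hs]; ring]
    exact Real.sqrt_sq (by positivity)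
  have hsq3 : Real.sqrt (nb ^ 2 + 1) = A * B / (p * w) := by
    rw [show nb ^ 2 + 1 = (A * B / (p * w)) ^ 2 by
      rw [hn', div_pow, div_pow, mul_pow, mul_pow, mul_pow, hp2, hq2, ht2, hw2, hA2, hB2]
      field_simp
      rw [hs]; ring]
    exact Real.sqrt_sq (by positivity)
  -- l - mb - nb
  have hsub : l - mb - nb = q ^ 3 / (p * t * w) := by
    have h1 : l - mb - nb = (s - a) * q / (p * t * w) := by
      rw [hl, hm, hn, hrAv]
      field_simp
      rw [hs]; ring
    rw [h1, ← hq2]; ring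
  -- numerator rewrite
  have key : Real.sqrt (l ^ 2 + 1) + Real.sqrt (mb ^ 2 + 1) + Real.sqrt (nb ^ 2 + 1)
      + l - mb - nb + 1
      = B * C / (t * w) + C * A / (p * t) + A * B / (p * w) + q ^ 3 / (p * t * w) + 1 := by
    rw [hsq1, hsq2, hsq3]; linarith [hsub]
  -- cosh σA ^ 2
  have hexp : Real.cosh (αA + βA + γA)
      = (p * B * C + p * w * t + A * w * C + A * B * t) / q ^ 3 := by
    rw [Real.cosh_add, Real.sinh_add, Real.cosh_add,
      hca, hcb, hcc, hsa, hsb, hsc]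
    field_simp; ring
  have hcs : Real.cosh σA ^ 2
      = ((p * B * C + p * w * t + A * w * C + A * B * t) / q ^ 3 + 1) / 2 := by
    rw [← hexp, show αA + βA + γA = 2 * σA by rw [hσA]; ring, Real.cosh_two_mul, Real.sinh_sq]
    ring
  rw [key, hrAv, hrv, hl', hcs]
  field_simp
  ring
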